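/- Any complete cap in $\mathbb{F}_{243}$ has at least 22 elements. Consequently, the subgroup of 22nd roots of unity, being a complete cap of size 22, is a complete cap of minimum size. -/

import Mathlib

open Polynomial in
theorem stmt13 (F : Type*) [Field F] [Fintype F] (hF : Fintype.card F = 243) :
    (∀ C : Set F,
      (¬ ∃ a b c, a ∈ C ∧ b ∈ C ∧ c ∈ C ∧ a ≠ b ∧ a ≠ c ∧ b ≠ c ∧ a + b + c = 0) →
      (∀ y : F, y ∉ C → ∃ x₁ x₂, x₁ ∈ C ∧ x₂ ∈ C ∧ x₁ ≠ x₂ ∧ y + x₁ + x₂ = 0) →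
      22 ≤ C.ncard) ∧
    ({x : F | x ^ 22 = 1}).ncard = 22 := by
  classical
  constructor
  · intro C _ hcomp
    by_contra h
    push_neg at h
    have hCfin : C.Finite := Set.toFinite C
    set Cf := hCfin.toFinset with hCf
    have hcard : Cf.card ≤ 21 := by
      have : C.ncard = Cf.card := by
        exact Set.ncard_eq_toFinset_card C hCfin
      omega
    set T : Finset F := Cf ∪ (Cf.powersetCard 2).image (fun s => -∑ x ∈ s, x) with hT
    have hsub : (Finset.univ : Finset F) ⊆ T := by
      intro y _
      by_cases hy : y ∈ C
      · exact Finset.mem_union_left _ (by simpa [hCf] using hy)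
      · obtain ⟨x₁, x₂, h1, h2, hne, heq⟩ := hcomp y hy
        refine Finset.mem_union_right _ (Finset.mem_image.2 ⟨{x₁, x₂}, ?_, ?_⟩)
        · rw [Finset.mem_powersetCard]
          constructor
          · intro z hz
            rcases Finset.mem_insert.1 hz with rfl | hz
            · simpa [hCf] using h1
            · simp only [Finset.mem_singleton] at hz
              subst hz; simpa [hCf] using h2
          · rw [Finset.card_insert_of_notMem (by simpa using hne), Finset.card_singleton]
        · rw [Finset.sum_pair hne]
          linear_combination -heq
    have hle : (243 : ℕ) ≤ T.card := by
      have := Finset.card_le_card hsub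
      rwa [Finset.card_univ, hF] at this
    have hTle : T.card ≤ Cf.card + Nat.choose Cf.card 2 := by
      calc T.card ≤ Cf.card + ((Cf.powersetCard 2).image (fun s => -∑ x ∈ s, x)).card :=
            Finset.card_union_le _ _
        _ ≤ Cf.card + (Cf.powersetCard 2).card := by
            gcongr; exact Finset.card_image_le
        _ = Cf.card + Nat.choose Cf.card 2 := by rw [Finset.card_powersetCard]
    have hch : Nat.choose Cf.card 2 ≤ Nat.choose 21 2 := Nat.choose_mono 2 hcard
    have : Nat.choose 21 2 = 210 := by decide
    omega
  · -- 22nd roots of unity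
    have hcardu : Fintype.card Fˣ = 242 := by
      rw [Fintype.card_units, hF]
    obtain ⟨g, hg⟩ := IsCyclic.exists_monoid_generator (α := Fˣ)
    have horder : orderOf g = 242 := by
      rw [orderOf_eq_card_of_forall_mem_zpowers (fun x => Subgroup.mem_zpowers_iff.2
        (by obtain ⟨n, hn⟩ := hg x; exact ⟨n, by exact_mod_cast hn⟩)), Nat.card_eq_fintype_card, hcardu]
    have hζord : orderOf (g ^ 11) = 22 := by
      rw [orderOf_pow, horder]; decide
    have hζF : orderOf ((g ^ 11 : Fˣ) : F) = 22 := by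
      rw [orderOf_units, hζord]
    have hprim : IsPrimitiveRoot ((g ^ 11 : Fˣ) : F) 22 := by
      rw [← hζF]; exact IsPrimitiveRoot.orderOf _
    have hset : {x : F | x ^ 22 = 1} = ↑(nthRootsFinset 22 (1 : F)) := by
      ext x
      simp [mem_nthRootsFinset (by norm_num : (0:ℕ) < 22) (1 : F)]
    rw [hset, Set.ncard_coe_finset, hprim.card_nthRootsFinset]
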